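/- Weak law of large numbers for convolutionary random vectors (bounded Lipschitz test functions): let {X_i} be a convolutionary sequence of identically distributed d-dimensional random vectors on (Ω,H,𝔼) with 𝔼[|X₁|²] < ∞, and suppose there exists an independent sequence {X̂_i} on (Ω̂,Ĥ,Ê) with X̂_i identically distributed as X_i such that the weak law of large numbers holds for {X̂_i} (Peng's theorem): lim_n Ê[φ(Ŝ_n/n)] = Ê[φ(η̂)] for the maximal distribution η̂ with generator G(p)=Ê[⟨p,X̂₁⟩]. Then for any maximal distributed η on (Ω,H,𝔼) with generator G(p)=𝔼[⟨p,X₁⟩] and any bounded Lipschitz φ, lim_{n→∞} 𝔼[φ(S_n/n)] = 𝔼[φ(η)], where S_n = ∑_{i=1}^n X_i. -/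

import Mathlib

open Filter Topology

/-- Locally Lipschitz test functions of class `C_{l,Lip}`. -/
def LocLip {V : Type*} [NormedAddCommGroup V] (φ : V → ℝ) : Prop :=
  ∃ C > (0 : ℝ), ∃ m : ℕ, ∀ x y : V, |φ x - φ y| ≤ C * (1 + ‖x‖ ^ m + ‖y‖ ^ m) * ‖x - y‖

/-- Bounded Lipschitz test functions of class `C_{b,Lip}`. -/
def BddLip {V : Type*} [NormedAddCommGroup V] (φ : V → ℝ) : Prop :=
  (∃ M : ℝ, ∀ x, |φ x| ≤ M) ∧ ∃ C : ℝ, ∀ x y : V, |φ x - φ y| ≤ C * ‖x - y‖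

lemma lip_loclip {V : Type*} [NormedAddCommGroup V] {φ : V → ℝ} {K : ℝ}
    (h : ∀ x y, |φ x - φ y| ≤ K * ‖x - y‖) : LocLip φ := by
  refine ⟨max K 1, lt_of_lt_of_le one_pos (le_max_right _ _), 0, fun x y => ?_⟩
  have h0 := h x y
  have h1 : K ≤ max K 1 := le_max_left _ _
  have h2 : (0:ℝ) ≤ ‖x - y‖ := norm_nonneg _
  have h3 : (1:ℝ) ≤ max K 1 := le_max_right _ _
  simp only [pow_zero]
  nlinarith

lemma bddlip_loclip {V : Type*} [NormedAddCommGroup V] {φ : V → ℝ}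
    (h : BddLip φ) : LocLip φ := by
  obtain ⟨_, C, hC⟩ := h
  exact lip_loclip hC

/-- difference bound for sublinear expectations -/
lemma sub_bound {Ω : Type*} (E : (Ω → ℝ) → ℝ)
    (hmono : ∀ f g : Ω → ℝ, f ≤ g → E f ≤ E g)
    (hconst : ∀ c : ℝ, E (fun _ => c) = c)
    (hsubadd : ∀ f g : Ω → ℝ, E (f + g) ≤ E f + E g)
    (f g : Ω → ℝ) (c : ℝ) (h : ∀ ω, |f ω - g ω| ≤ c) :
    |E f - E g| ≤ c := by
  have key : ∀ f g : Ω → ℝ, (∀ ω, f ω - g ω ≤ c) → E f - E g ≤ c := by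
    intro f g hfg
    have : E f ≤ E g + c := by
      have h1 : E f = E (g + (f - g)) := by congr 1; ext ω; simp
      rw [h1]
      calc E (g + (f - g)) ≤ E g + E (f - g) := hsubadd _ _
        _ ≤ E g + c := by
            have := hmono (f - g) (fun _ => c) (fun ω => by simpa using hfg ω)
            rw [hconst] at this; linarith
    linarith
  have h1 := key f g (fun ω => (abs_le.mp (h ω)).2)
  have h2 := key g f (fun ω => by have := (abs_le.mp (h ω)).1; linarith)
  rw [abs_le]; constructor <;> linarith

/-- boundedness transfers -/
lemma exp_abs_le {Ω : Type*} (E : (Ω → ℝ) → ℝ)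
    (hmono : ∀ f g : Ω → ℝ, f ≤ g → E f ≤ E g)
    (hconst : ∀ c : ℝ, E (fun _ => c) = c)
    (f : Ω → ℝ) (M : ℝ) (h : ∀ ω, |f ω| ≤ M) : |E f| ≤ M := by
  rw [abs_le]; constructor
  · have := hmono (fun _ => -M) f (fun ω => (abs_le.mp (h ω)).1)
    rw [hconst] at this; linarith
  · have := hmono f (fun _ => M) (fun ω => (abs_le.mp (h ω)).2)
    rw [hconst] at this; linarith

lemma subset_of_support {d : ℕ} (Γ Γh : Set (Fin d → ℝ))
    (hΓbd : Bornology.IsBounded Γ)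
    (hΓhne : Γh.Nonempty) (hΓhcl : IsClosed Γh) (hΓhcx : Convex ℝ Γh)
    (hS : ∀ p : Fin d → ℝ,
      sSup ((fun x => ∑ j, p j * x j) '' Γ) ≤ sSup ((fun x => ∑ j, p j * x j) '' Γh)) :
    Γ ⊆ Γh := by
  intro x hx
  by_contra hxn
  obtain ⟨f, u, hfu, hux⟩ := geometric_hahn_banach_closed_point hΓhcx hΓhcl hxn
  set p : Fin d → ℝ := fun j => f (fun k => if j = k then (1:ℝ) else 0) with hp
  have hrep : ∀ y : Fin d → ℝ, (∑ j, p j * y j) = f y := by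
    intro y
    conv_rhs => rw [pi_eq_sum_univ y]
    rw [map_sum]
    refine Finset.sum_congr rfl fun j _ => ?_
    rw [map_smul]
    simp [hp, mul_comm]
  have h1 : sSup ((fun x => ∑ j, p j * x j) '' Γh) ≤ u := by
    refine csSup_le (hΓhne.image _) ?_
    rintro z ⟨a, ha, rfl⟩
    simp only [hrep]
    exact (hfu a ha).le
  obtain ⟨R, hR⟩ := Bornology.IsBounded.exists_norm_le hΓbd
  have hbdd : BddAbove ((fun x => ∑ j, p j * x j) '' Γ) := by
    refine ⟨‖f‖ * R, ?_⟩
    rintro z ⟨a, ha, rfl⟩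
    simp only [hrep]
    calc f a ≤ ‖f a‖ := le_abs_self _
      _ ≤ ‖f‖ * ‖a‖ := f.le_opNorm a
      _ ≤ ‖f‖ * R := mul_le_mul_of_nonneg_left (hR a ha) (norm_nonneg f)
  have h2 : (∑ j, p j * x j) ≤ sSup ((fun x => ∑ j, p j * x j) '' Γ) :=
    le_csSup hbdd ⟨x, hx, rfl⟩
  rw [hrep] at h2
  have := hS p
  linarith

lemma set_eq_of_support {d : ℕ} (Γ Γh : Set (Fin d → ℝ))
    (hΓ : Γ.Nonempty ∧ Bornology.IsBounded Γ ∧ IsClosed Γ ∧ Convex ℝ Γ)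
    (hΓh : Γh.Nonempty ∧ Bornology.IsBounded Γh ∧ IsClosed Γh ∧ Convex ℝ Γh)
    (hS : ∀ p : Fin d → ℝ,
      sSup ((fun x => ∑ j, p j * x j) '' Γ) = sSup ((fun x => ∑ j, p j * x j) '' Γh)) :
    Γ = Γh := by
  obtain ⟨hne, hbd, hcl, hcx⟩ := hΓ
  obtain ⟨hneh, hbdh, hclh, hcxh⟩ := hΓh
  refine Set.Subset.antisymm ?_ ?_
  · exact subset_of_support Γ Γh hbd hneh hclh hcxh (fun p => (hS p).le)
  · exact subset_of_support Γh Γ hbdh hne hcl hcx (fun p => (hS p).ge)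

lemma sum_fin_icc {d : ℕ} (n : ℕ) (g : ℕ → Fin d → ℝ) :
    (∑ j : Fin n, g (j + 1)) = ∑ i ∈ Finset.Icc 1 n, g i := by
  rw [Fin.sum_univ_eq_sum_range (fun j => g (j + 1)) n, ← Finset.Ico_add_one_right_eq_Icc,
    Finset.sum_Ico_eq_sum_range]
  simp [add_comm]

lemma comparison {Ω Ωh : Type*} {d : ℕ}
    (E : (Ω → ℝ) → ℝ) (Eh : (Ωh → ℝ) → ℝ)
    (hmonoh : ∀ f g : Ωh → ℝ, f ≤ g → Eh f ≤ Eh g)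
    (hconsth : ∀ c : ℝ, Eh (fun _ => c) = c)
    (hsubaddh : ∀ f g : Ωh → ℝ, Eh (f + g) ≤ Eh f + Eh g)
    (X : ℕ → Ω → Fin d → ℝ)
    (hconv : ∀ n k : ℕ, 1 ≤ k → k ≤ n → ∀ φ : (Fin d → ℝ) → ℝ, LocLip φ →
      E (fun ω => φ ((∑ i ∈ Finset.Icc k n, X i ω) + X (n + 1) ω)) =
        E (fun ω => E (fun ω' => φ ((∑ i ∈ Finset.Icc k n, X i ω) + X (n + 1) ω'))))
    (hid : ∀ i : ℕ, 1 ≤ i → ∀ φ : (Fin d → ℝ) → ℝ, LocLip φ →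
      E (fun ω => φ (X i ω)) = E (fun ω => φ (X 1 ω)))
    (Xh : ℕ → Ωh → Fin d → ℝ)
    (hindep : ∀ n : ℕ, 1 ≤ n → ∀ φ : (Fin n → Fin d → ℝ) × (Fin d → ℝ) → ℝ, LocLip φ →
      Eh (fun ω => φ (fun j => Xh (j + 1) ω, Xh (n + 1) ω)) =
        Eh (fun ω => Eh (fun ω' => φ (fun j => Xh (j + 1) ω, Xh (n + 1) ω'))))
    (hidh : ∀ i : ℕ, 1 ≤ i → ∀ φ : (Fin d → ℝ) → ℝ, LocLip φ →
      Eh (fun ω => φ (Xh i ω)) = E (fun ω => φ (X i ω))) :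
    ∀ n : ℕ, 1 ≤ n → ∀ φ : (Fin d → ℝ) → ℝ, BddLip φ →
      E (fun ω => φ (∑ i ∈ Finset.Icc 1 n, X i ω)) =
        Eh (fun ω => φ (∑ i ∈ Finset.Icc 1 n, Xh i ω)) := by
  intro n hn
  induction n, hn using Nat.le_induction with
  | base =>
    intro φ hφ
    simp only [Finset.Icc_self, Finset.sum_singleton]
    exact (hidh 1 le_rfl φ (bddlip_loclip hφ)).symm
  | succ n hn IH =>
    intro φ hφ
    obtain ⟨⟨M, hM⟩, C, hC⟩ := hφ
    -- replace C by |C|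
    set C' : ℝ := |C| with hC'def
    have hC'0 : 0 ≤ C' := abs_nonneg _
    have hC' : ∀ x y : Fin d → ℝ, |φ x - φ y| ≤ C' * ‖x - y‖ := fun x y =>
      (hC x y).trans (mul_le_mul_of_nonneg_right (le_abs_self C) (norm_nonneg _))
    have hφbdd : BddLip φ := ⟨⟨M, hM⟩, C', hC'⟩
    have hφloc : LocLip φ := bddlip_loclip hφbdd
    -- sums split
    have hsum : ∀ ω, (∑ i ∈ Finset.Icc 1 (n+1), X i ω) =
        (∑ i ∈ Finset.Icc 1 n, X i ω) + X (n+1) ω := fun ω =>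
      Finset.sum_Icc_succ_top (by omega) _
    have hsumh : ∀ ω, (∑ i ∈ Finset.Icc 1 (n+1), Xh i ω) =
        (∑ i ∈ Finset.Icc 1 n, Xh i ω) + Xh (n+1) ω := fun ω =>
      Finset.sum_Icc_succ_top (by omega) _
    -- shifted test functions
    have hshift : ∀ x : Fin d → ℝ, BddLip (fun z => φ (x + z)) := by
      intro x
      refine ⟨⟨M, fun z => hM _⟩, C', fun z w => ?_⟩
      have := hC' (x + z) (x + w)
      simpa [add_sub_add_left_eq_sub] using this
    -- the kernel ψ
    set ψ : (Fin d → ℝ) → ℝ := fun x => Eh (fun ω' => φ (x + Xh 1 ω')) with hψdef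
    have hψ1 : ∀ x : Fin d → ℝ,
        E (fun ω' => φ (x + X (n+1) ω')) = ψ x := by
      intro x
      have h1 := hid (n+1) (by omega) (fun z => φ (x + z)) (bddlip_loclip (hshift x))
      have h2 := hidh 1 le_rfl (fun z => φ (x + z)) (bddlip_loclip (hshift x))
      rw [h1, ← h2]
    have hψ2 : ∀ x : Fin d → ℝ,
        ψ x = Eh (fun ω' => φ (x + Xh (n+1) ω')) := by
      intro x
      have h1 := hidh (n+1) (by omega) (fun z => φ (x + z)) (bddlip_loclip (hshift x))
      have h2 := hid (n+1) (by omega) (fun z => φ (x + z)) (bddlip_loclip (hshift x))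
      have h3 := hidh 1 le_rfl (fun z => φ (x + z)) (bddlip_loclip (hshift x))
      rw [hψdef]; dsimp only
      rw [h3, ← h2, ← h1]
    have hψbdd : BddLip ψ := by
      constructor
      · exact ⟨M, fun x => exp_abs_le Eh hmonoh hconsth _ M (fun ω' => hM _)⟩
      · refine ⟨C', fun x y => ?_⟩
        refine sub_bound Eh hmonoh hconsth hsubaddh _ _ _ (fun ω' => ?_)
        have := hC' (x + Xh 1 ω') (y + Xh 1 ω')
        simpa [add_sub_add_right_eq_sub] using this
    -- step 1-3
    have step1 : E (fun ω => φ (∑ i ∈ Finset.Icc 1 (n+1), X i ω)) =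
        E (fun ω => ψ (∑ i ∈ Finset.Icc 1 n, X i ω)) := by
      have e1 : E (fun ω => φ (∑ i ∈ Finset.Icc 1 (n+1), X i ω)) =
          E (fun ω => φ ((∑ i ∈ Finset.Icc 1 n, X i ω) + X (n+1) ω)) := by
        congr 1; funext ω; rw [hsum ω]
      rw [e1, hconv n 1 le_rfl hn φ hφloc]
      congr 1; funext ω
      exact hψ1 _
    -- step: IH
    have step2 : E (fun ω => ψ (∑ i ∈ Finset.Icc 1 n, X i ω)) =
        Eh (fun ω => ψ (∑ i ∈ Finset.Icc 1 n, Xh i ω)) := IH ψ hψbdd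
    -- independence step
    set φ' : (Fin n → Fin d → ℝ) × (Fin d → ℝ) → ℝ :=
      fun q => φ ((∑ j : Fin n, q.1 j) + q.2) with hφ'def
    have hT : ∀ a b : (Fin n → Fin d → ℝ) × (Fin d → ℝ),
        ‖((∑ j : Fin n, a.1 j) + a.2) - ((∑ j : Fin n, b.1 j) + b.2)‖ ≤
          ((n : ℝ) + 1) * ‖a - b‖ := by
      intro a b
      have e : ((∑ j : Fin n, a.1 j) + a.2) - ((∑ j : Fin n, b.1 j) + b.2) =
          (∑ j : Fin n, (a.1 j - b.1 j)) + (a.2 - b.2) := by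
        rw [Finset.sum_sub_distrib]; abel
      rw [e]
      calc ‖(∑ j : Fin n, (a.1 j - b.1 j)) + (a.2 - b.2)‖
          ≤ ‖∑ j : Fin n, (a.1 j - b.1 j)‖ + ‖a.2 - b.2‖ := norm_add_le _ _
        _ ≤ (∑ j : Fin n, ‖a.1 j - b.1 j‖) + ‖a.2 - b.2‖ := by
            gcongr; exact norm_sum_le _ _
        _ ≤ (∑ _j : Fin n, ‖a - b‖) + ‖a - b‖ := by
            gcongr with j hj
            · show ‖(a.1 - b.1) j‖ ≤ ‖a - b‖
              exact (norm_le_pi_norm (a.1 - b.1) j).trans (norm_fst_le (a - b))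
            · exact norm_snd_le (a - b)
        _ = ((n : ℝ) + 1) * ‖a - b‖ := by
            rw [Finset.sum_const]; simp; ring
    have hφ'loc : LocLip φ' := by
      refine lip_loclip (K := C' * ((n : ℝ) + 1)) (fun a b => ?_)
      calc |φ' a - φ' b| ≤ C' * ‖((∑ j : Fin n, a.1 j) + a.2) - ((∑ j : Fin n, b.1 j) + b.2)‖ :=
            hC' _ _
        _ ≤ C' * (((n : ℝ) + 1) * ‖a - b‖) :=
            mul_le_mul_of_nonneg_left (hT a b) hC'0
        _ = C' * ((n : ℝ) + 1) * ‖a - b‖ := by ring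
    have hind := hindep n hn φ' hφ'loc
    have eL : Eh (fun ω => φ' (fun j => Xh (j + 1) ω, Xh (n + 1) ω)) =
        Eh (fun ω => φ (∑ i ∈ Finset.Icc 1 (n+1), Xh i ω)) := by
      congr 1; funext ω
      rw [hφ'def]; dsimp only
      rw [sum_fin_icc n (fun i => Xh i ω), hsumh ω]
    have eR : Eh (fun ω => Eh (fun ω' => φ' (fun j => Xh (j + 1) ω, Xh (n + 1) ω'))) =
        Eh (fun ω => ψ (∑ i ∈ Finset.Icc 1 n, Xh i ω)) := by
      congr 1; funext ω
      rw [hφ'def]; dsimp only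
      rw [hψ2 (∑ i ∈ Finset.Icc 1 n, Xh i ω)]
      congr 1; funext ω'
      rw [sum_fin_icc n (fun i => Xh i ω)]
    rw [step1, step2, ← eR, ← hind, eL]

/-- Weak law of large numbers for a convolutionary sequence of identically distributed
random vectors (bounded Lipschitz test functions): via the comparison with an
independent copy sequence satisfying Peng's weak LLN,
`lim_n 𝔼[φ(Sₙ/n)] = 𝔼[φ(η)]` for the maximal distribution `η` with generator
`G(p) = 𝔼[⟨p, X₁⟩]`. -/
theorem weak_lln_convolutionary
    {Ω Ωh : Type*} {d : ℕ}
    (E : (Ω → ℝ) → ℝ) (Eh : (Ωh → ℝ) → ℝ)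
    (hmono : ∀ f g : Ω → ℝ, f ≤ g → E f ≤ E g)
    (hconst : ∀ c : ℝ, E (fun _ => c) = c)
    (hsubadd : ∀ f g : Ω → ℝ, E (f + g) ≤ E f + E g)
    (hpos : ∀ l : ℝ, 0 ≤ l → ∀ f : Ω → ℝ, E (l • f) = l * E f)
    (hmonoh : ∀ f g : Ωh → ℝ, f ≤ g → Eh f ≤ Eh g)
    (hconsth : ∀ c : ℝ, Eh (fun _ => c) = c)
    (hsubaddh : ∀ f g : Ωh → ℝ, Eh (f + g) ≤ Eh f + Eh g)
    (hposh : ∀ l : ℝ, 0 ≤ l → ∀ f : Ωh → ℝ, Eh (l • f) = l * Eh f)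
    (X : ℕ → Ω → Fin d → ℝ)
    -- `{Xᵢ}` is a convolutionary sequence
    (hconv : ∀ n k : ℕ, 1 ≤ k → k ≤ n → ∀ φ : (Fin d → ℝ) → ℝ, LocLip φ →
      E (fun ω => φ ((∑ i ∈ Finset.Icc k n, X i ω) + X (n + 1) ω)) =
        E (fun ω => E (fun ω' => φ ((∑ i ∈ Finset.Icc k n, X i ω) + X (n + 1) ω'))))
    -- the `Xᵢ` are identically distributed
    (hid : ∀ i : ℕ, 1 ≤ i → ∀ φ : (Fin d → ℝ) → ℝ, LocLip φ →
      E (fun ω => φ (X i ω)) = E (fun ω => φ (X 1 ω)))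
    -- finite second moment `𝔼[|X₁|²] < ∞`
    (hmom2 : ∃ M : ℝ, E (fun ω => ‖X 1 ω‖ ^ 2) ≤ M)
    (Xh : ℕ → Ωh → Fin d → ℝ)
    -- `{X̂ᵢ}` is an independent sequence
    (hindep : ∀ n : ℕ, 1 ≤ n → ∀ φ : (Fin n → Fin d → ℝ) × (Fin d → ℝ) → ℝ, LocLip φ →
      Eh (fun ω => φ (fun j => Xh (j + 1) ω, Xh (n + 1) ω)) =
        Eh (fun ω => Eh (fun ω' => φ (fun j => Xh (j + 1) ω, Xh (n + 1) ω'))))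
    -- `X̂ᵢ` identically distributed as `Xᵢ`
    (hidh : ∀ i : ℕ, 1 ≤ i → ∀ φ : (Fin d → ℝ) → ℝ, LocLip φ →
      Eh (fun ω => φ (Xh i ω)) = E (fun ω => φ (X i ω)))
    -- `η̂` is maximal distributed with generator `Ĝ(p) = Ê[⟨p, X̂₁⟩]`
    (ηh : Ωh → Fin d → ℝ) (Γh : Set (Fin d → ℝ))
    (hΓh : Γh.Nonempty ∧ Bornology.IsBounded Γh ∧ IsClosed Γh ∧ Convex ℝ Γh)
    (hmaxh : ∀ φ : (Fin d → ℝ) → ℝ, LocLip φ →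
      Eh (fun ω => φ (ηh ω)) = sSup (φ '' Γh))
    (hgenh : ∀ p : Fin d → ℝ,
      sSup ((fun x => ∑ j, p j * x j) '' Γh) = Eh (fun ω => ∑ j, p j * Xh 1 ω j))
    -- Peng's weak law of large numbers holds for `{X̂ᵢ}`
    (hLLN : ∀ φ : (Fin d → ℝ) → ℝ, BddLip φ →
      Tendsto (fun n : ℕ =>
          Eh (fun ω => φ ((n : ℝ)⁻¹ • ∑ i ∈ Finset.Icc 1 n, Xh i ω)))
        atTop (𝓝 (Eh (fun ω => φ (ηh ω)))))
    -- `η` is maximal distributed on `(Ω, H, 𝔼)` with generator `G(p) = 𝔼[⟨p, X₁⟩]`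
    (η : Ω → Fin d → ℝ) (Γ : Set (Fin d → ℝ))
    (hΓ : Γ.Nonempty ∧ Bornology.IsBounded Γ ∧ IsClosed Γ ∧ Convex ℝ Γ)
    (hmax : ∀ φ : (Fin d → ℝ) → ℝ, LocLip φ →
      E (fun ω => φ (η ω)) = sSup (φ '' Γ))
    (hgen : ∀ p : Fin d → ℝ,
      sSup ((fun x => ∑ j, p j * x j) '' Γ) = E (fun ω => ∑ j, p j * X 1 ω j)) :
    ∀ φ : (Fin d → ℝ) → ℝ, BddLip φ →
      Tendsto (fun n : ℕ =>
          E (fun ω => φ ((n : ℝ)⁻¹ • ∑ i ∈ Finset.Icc 1 n, X i ω)))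
        atTop (𝓝 (E (fun ω => φ (η ω)))) := by
  
  intro φ hφ
  -- the generating sets agree
  have hΓeq : Γ = Γh := by
    apply set_eq_of_support Γ Γh hΓ hΓh
    intro p
    have hlin : LocLip (fun x : Fin d → ℝ => ∑ j, p j * x j) := by
      refine lip_loclip (K := ∑ j, |p j|) (fun x y => ?_)
      calc |(∑ j, p j * x j) - ∑ j, p j * y j| = |∑ j, p j * (x j - y j)| := by
            rw [← Finset.sum_sub_distrib]
            congr 1
            exact Finset.sum_congr rfl fun j _ => by ring
        _ ≤ ∑ j, |p j * (x j - y j)| := Finset.abs_sum_le_sum_abs _ _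
        _ ≤ ∑ j, |p j| * ‖x - y‖ := by
            refine Finset.sum_le_sum fun j _ => ?_
            rw [abs_mul]
            refine mul_le_mul_of_nonneg_left ?_ (abs_nonneg _)
            calc |x j - y j| = ‖(x - y) j‖ := by simp
              _ ≤ ‖x - y‖ := norm_le_pi_norm _ j
        _ = (∑ j, |p j|) * ‖x - y‖ := by rw [Finset.sum_mul]
    rw [hgen p, hgenh p, ← hidh 1 le_rfl _ hlin]
  have key := comparison E Eh hmonoh hconsth hsubaddh X hconv hid Xh hindep hidh
  have hlim : Eh (fun ω => φ (ηh ω)) = E (fun ω => φ (η ω)) := by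
    rw [hmaxh φ (bddlip_loclip hφ), hmax φ (bddlip_loclip hφ), hΓeq]
  have heq : (fun n : ℕ =>
        Eh (fun ω => φ ((n : ℝ)⁻¹ • ∑ i ∈ Finset.Icc 1 n, Xh i ω))) =ᶠ[atTop]
      (fun n : ℕ =>
        E (fun ω => φ ((n : ℝ)⁻¹ • ∑ i ∈ Finset.Icc 1 n, X i ω))) := by
    filter_upwards [eventually_ge_atTop 1] with n hn
    have hφn : BddLip (fun x : Fin d → ℝ => φ ((n : ℝ)⁻¹ • x)) := by
      obtain ⟨⟨M, hM⟩, C, hC⟩ := hφ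
      refine ⟨⟨M, fun x => hM _⟩, |C|, fun x y => ?_⟩
      have h1 := hC ((n : ℝ)⁻¹ • x) ((n : ℝ)⁻¹ • y)
      have h2 : ‖(n : ℝ)⁻¹ • x - (n : ℝ)⁻¹ • y‖ = (n : ℝ)⁻¹ * ‖x - y‖ := by
        rw [← smul_sub, norm_smul]
        congr 1
        simp
      have h3 : (n : ℝ)⁻¹ ≤ 1 := by
        rw [inv_le_one_iff₀]
        right
        exact_mod_cast hn
      have h4 : (0 : ℝ) ≤ (n : ℝ)⁻¹ := by positivity
      have h5 : C ≤ |C| := le_abs_self C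
      have h6 : (0 : ℝ) ≤ |C| := abs_nonneg C
      have h7 : (0 : ℝ) ≤ ‖x - y‖ := norm_nonneg _
      rw [h2] at h1
      show |φ ((n : ℝ)⁻¹ • x) - φ ((n : ℝ)⁻¹ • y)| ≤ |C| * ‖x - y‖
      nlinarith [mul_nonneg (mul_nonneg (sub_nonneg.mpr h5) h4) h7,
        mul_nonneg (mul_nonneg h6 (sub_nonneg.mpr h3)) h7]
    exact (key n hn (fun x => φ ((n : ℝ)⁻¹ • x)) hφn).symm
  rw [← hlim]
  exact (hLLN φ hφ).congr' heq
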